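/- Let θ_1 > θ_2 > … > θ_I > 0, N_1, …, N_I > 0, and S > 0. Then there exists a unique p > 0 such that ∑_{i=1}^I N_i·(θ_i/p − 1)^+ = S; moreover this p satisfies p < θ_1. -/

import Mathlib

/-- Existence and uniqueness of the optimal single price p, which moreover satisfies p < θ_1.
Groups are indexed 0, …, I−1 (so θ 0 is the highest willingness to pay θ_1). -/
theorem sp_price_exists_unique (I : ℕ) (hI : 1 ≤ I) (θ N : ℕ → ℝ)
    (hθpos : ∀ i < I, 0 < θ i)
    (hθanti : ∀ i j, i < j → j < I → θ j < θ i)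
    (hN : ∀ i < I, 0 < N i)
    (S : ℝ) (hS : 0 < S) :
    ∃ p : ℝ, 0 < p ∧
      (∑ i ∈ Finset.range I, N i * max (θ i / p - 1) 0 = S) ∧
      p < θ 0 ∧
      ∀ p' : ℝ, 0 < p' →
        (∑ i ∈ Finset.range I, N i * max (θ i / p' - 1) 0 = S) →
        p' = p := by
  set f : ℝ → ℝ := fun p => ∑ i ∈ Finset.range I, N i * max (θ i / p - 1) 0 with hf
  have hθ0 : 0 < θ 0 := hθpos 0 hI
  have hN0 : 0 < N 0 := hN 0 hI
  have h0mem : (0 : ℕ) ∈ Finset.range I := Finset.mem_range.2 hI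
  have hθle : ∀ i < I, θ i ≤ θ 0 := by
    intro i hi
    rcases Nat.eq_zero_or_pos i with h | h
    · simp [h]
    · exact (hθanti 0 i h hi).le
  -- f vanishes for p ≥ θ 0
  have hzero : ∀ p : ℝ, θ 0 ≤ p → f p = 0 := by
    intro p hp
    apply Finset.sum_eq_zero
    intro i hi
    have hi' := Finset.mem_range.1 hi
    have hp0 : 0 < p := lt_of_lt_of_le hθ0 hp
    have : θ i / p ≤ 1 := by
      rw [div_le_one hp0]
      exact le_trans (hθle i hi') hp
    have : max (θ i / p - 1) 0 = 0 := by
      apply max_eq_right; linarith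
    simp [this]
  -- strict antitonicity on (0, θ 0]
  have key : ∀ p q : ℝ, 0 < p → p < q → q ≤ θ 0 → f q < f p := by
    intro p q hp hpq hq
    apply Finset.sum_lt_sum
    · intro i hi
      have hi' := Finset.mem_range.1 hi
      have hθi : 0 < θ i := hθpos i hi'
      have h1 : θ i / q ≤ θ i / p := by gcongr
      have h2 : max (θ i / q - 1) 0 ≤ max (θ i / p - 1) 0 :=
        max_le_max (by linarith) le_rfl
      exact mul_le_mul_of_nonneg_left h2 (hN i hi').le
    · refine ⟨0, h0mem, ?_⟩
      have hq0 : 0 < q := hp.trans hpq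
      have hbig : 1 < θ 0 / p := (one_lt_div hp).2 (lt_of_lt_of_le hpq hq)
      have h1 : θ 0 / q < θ 0 / p := by gcongr
      have h2 : max (θ 0 / q - 1) 0 < max (θ 0 / p - 1) 0 := by
        rw [max_eq_left (by linarith : (0:ℝ) ≤ θ 0 / p - 1)]
        exact max_lt (by linarith) (by linarith)
      exact mul_lt_mul_of_pos_left h2 hN0
  -- the small price p0
  set p0 : ℝ := θ 0 * N 0 / (S + N 0) with hp0def
  have hSN : 0 < S + N 0 := by linarith
  have hp0pos : 0 < p0 := div_pos (mul_pos hθ0 hN0) hSN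
  have hp0lt : p0 < θ 0 := by
    rw [hp0def, div_lt_iff₀ hSN]
    nlinarith
  have hterm0 : N 0 * max (θ 0 / p0 - 1) 0 = S := by
    have h1 : θ 0 / p0 = (S + N 0) / N 0 := by
      rw [hp0def]
      field_simp
    rw [h1]
    have h2 : (S + N 0) / N 0 - 1 = S / N 0 := by field_simp; ring
    rw [h2, max_eq_left (le_of_lt (div_pos hS hN0))]
    field_simp
  have hfp0 : S ≤ f p0 := by
    rw [← hterm0]
    apply Finset.single_le_sum (f := fun i => N i * max (θ i / p0 - 1) 0) _ h0mem
    intro i hi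
    exact mul_nonneg (hN i (Finset.mem_range.1 hi)).le (le_max_right _ _)
  have hfθ0 : f (θ 0) = 0 := hzero (θ 0) le_rfl
  -- continuity
  have cont : ContinuousOn f (Set.Icc p0 (θ 0)) := by
    apply continuousOn_finset_sum
    intro i _
    apply ContinuousOn.mul continuousOn_const
    apply ContinuousOn.sup _ continuousOn_const
    apply ContinuousOn.sub _ continuousOn_const
    apply ContinuousOn.div continuousOn_const continuousOn_id
    intro x hx
    exact ne_of_gt (lt_of_lt_of_le hp0pos hx.1)
  -- IVT
  have hsub := intermediate_value_Icc' hp0lt.le cont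
  have hmem : S ∈ Set.Icc (f (θ 0)) (f p0) := by
    rw [hfθ0]; exact ⟨hS.le, hfp0⟩
  obtain ⟨p, hpIcc, hpS⟩ := hsub hmem
  have hppos : 0 < p := lt_of_lt_of_le hp0pos hpIcc.1
  have hplt : p < θ 0 := by
    rcases lt_or_eq_of_le hpIcc.2 with h | h
    · exact h
    · exfalso; rw [h, hfθ0] at hpS; linarith
  refine ⟨p, hppos, hpS, hplt, ?_⟩
  intro p' hp' hfp'
  have hfp'f : f p' = S := hfp'
  have hp'lt : p' < θ 0 := by
    by_contra h
    push_neg at h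
    rw [hzero p' h] at hfp'f
    linarith
  rcases lt_trichotomy p' p with h | h | h
  · exfalso
    have := key p' p hp' h hplt.le
    rw [hpS, hfp'f] at this; linarith
  · exact h
  · exfalso
    have := key p p' hppos h hp'lt.le
    rw [hpS, hfp'f] at this; linarith
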